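/- Let Y = (Y₁, Y₂) be a standard Gaussian vector in ℝ² (mean 0, covariance I₂), and let K = {y ∈ ℝ² : y₂ = 0} ∪ {y ∈ ℝ² : y₁ = 0} be the union of the two coordinate axes, with metric projection pr(y₁, y₂) = (y₁·1{|y₁| > |y₂|}, y₂·1{|y₂| > |y₁|}) (defined for |y₁| ≠ |y₂|). Then the degrees of freedom df = Σᵢ cov(Yᵢ, prᵢ(Y)) = E(max{Y₁², Y₂²}) = 1 + 2/π, while the Stein degrees of freedom df_S = E(∇·pr(Y)) = 1; thus df − df_S = 2/π > 0. -/

import Mathlib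

open MeasureTheory

/-- The standard Gaussian density on `ℝ²`. -/
noncomputable def stdGauss2 (y : EuclideanSpace ℝ (Fin 2)) : ℝ :=
  (2 * Real.pi)⁻¹ * Real.exp (-‖y‖ ^ 2 / 2)

/-! ### Auxiliary 1D Gaussian facts -/

noncomputable def g1 (t : ℝ) : ℝ := (Real.sqrt (2 * Real.pi))⁻¹ * Real.exp (-(1/2) * t ^ 2)

lemma sqrt2pi_pos : 0 < Real.sqrt (2 * Real.pi) := Real.sqrt_pos.2 (by positivity)

lemma g1_nonneg (t : ℝ) : 0 ≤ g1 t := by unfold g1; positivity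

lemma g1_cont : Continuous g1 := by unfold g1; continuity

lemma integrable_g1 : Integrable g1 :=
  (integrable_exp_neg_mul_sq (by norm_num : (0:ℝ) < 1/2)).const_mul _

lemma integrable_sq_g1 : Integrable (fun t => t ^ 2 * g1 t) := by
  have h := (integrable_rpow_mul_exp_neg_mul_sq (by norm_num : (0:ℝ) < 1/2)
      (by norm_num : (-1:ℝ) < 2)).const_mul (Real.sqrt (2 * Real.pi))⁻¹
  refine h.congr (Filter.Eventually.of_forall fun t => ?_)
  have : t ^ (2:ℝ) = t ^ 2 := by
    rw [show ((2:ℝ)) = ((2:ℕ):ℝ) by norm_num, Real.rpow_natCast]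
  simp only [g1, this]; ring

lemma integrable_abs_g1 : Integrable (fun t => |t| * g1 t) := by
  have h := ((integrable_mul_exp_neg_mul_sq (by norm_num : (0:ℝ) < 1/2)).const_mul
      (Real.sqrt (2 * Real.pi))⁻¹).abs
  refine h.congr (Filter.Eventually.of_forall fun t => ?_)
  simp only [g1, abs_mul, abs_of_nonneg (Real.exp_nonneg _),
    abs_of_nonneg (inv_nonneg.2 (Real.sqrt_nonneg _))]
  ring

lemma int_g1 : ∫ t, g1 t = 1 := by
  unfold g1
  rw [integral_const_mul, integral_gaussian]
  rw [show Real.pi / (1/2) = 2 * Real.pi by ring]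
  exact inv_mul_cancel₀ (ne_of_gt sqrt2pi_pos)

lemma int_Ioi_rpow (q : ℝ) (hq : -1 < q) :
    ∫ t in Set.Ioi (0:ℝ), t ^ q * Real.exp (-(1/2) * t ^ 2) =
      (1/2 : ℝ) ^ (-(q+1)/2) * (1/2) * Real.Gamma ((q+1)/2) := by
  have := integral_rpow_mul_exp_neg_mul_rpow (p := 2) (q := q) (b := 1/2)
    (by norm_num) hq (by norm_num)
  rw [← this]
  refine setIntegral_congr_fun measurableSet_Ioi (fun t ht => ?_)
  rw [show t ^ (2:ℝ) = t ^ 2 by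
    rw [show ((2:ℝ)) = ((2:ℕ):ℝ) by norm_num, Real.rpow_natCast]]

lemma int_sq_g1 : ∫ t, t ^ 2 * g1 t = 1 := by
  unfold g1
  have h1 : ∫ t : ℝ, t ^ 2 * ((Real.sqrt (2 * Real.pi))⁻¹ * Real.exp (-(1/2) * t ^ 2))
      = (Real.sqrt (2 * Real.pi))⁻¹ * ∫ t : ℝ, t ^ 2 * Real.exp (-(1/2) * t ^ 2) := by
    rw [← integral_const_mul]; congr 1; ext t; ring
  rw [h1]
  have h2 : ∫ t : ℝ, t ^ 2 * Real.exp (-(1/2) * t ^ 2)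
      = 2 * ∫ t in Set.Ioi (0:ℝ), t ^ 2 * Real.exp (-(1/2) * t ^ 2) := by
    rw [← integral_comp_abs (f := fun t => t ^ 2 * Real.exp (-(1/2) * t ^ 2))]
    congr 1; ext t; rw [sq_abs]
  have h3 : ∫ t in Set.Ioi (0:ℝ), t ^ 2 * Real.exp (-(1/2) * t ^ 2)
      = (1/2 : ℝ) ^ (-(3:ℝ)/2) * (1/2) * Real.Gamma ((3:ℝ)/2) := by
    have := int_Ioi_rpow 2 (by norm_num)
    rw [show ((2:ℝ)+1)/2 = (3:ℝ)/2 by norm_num, show (-((2:ℝ)+1)/2) = -(3:ℝ)/2 by norm_num] at this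
    rw [← this]
    refine setIntegral_congr_fun measurableSet_Ioi (fun t ht => ?_)
    rw [show t ^ (2:ℝ) = t ^ 2 by
      rw [show ((2:ℝ)) = ((2:ℕ):ℝ) by norm_num, Real.rpow_natCast]]
  have hGamma : Real.Gamma ((3:ℝ)/2) = Real.sqrt Real.pi / 2 := by
    rw [show (3:ℝ)/2 = 1/2 + 1 by norm_num, Real.Gamma_add_one (by norm_num),
      Real.Gamma_one_half_eq]
    ring
  have hpow : (1/2 : ℝ) ^ (-(3:ℝ)/2) = 2 * Real.sqrt 2 := by
    rw [show (1/2 : ℝ) = 2⁻¹ by norm_num, Real.inv_rpow (by norm_num), ← Real.rpow_neg (by norm_num)]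
    rw [show (-(-(3:ℝ)/2)) = 1 + (1/2 : ℝ) by norm_num, Real.rpow_add (by norm_num),
      Real.rpow_one, ← Real.sqrt_eq_rpow]
  rw [h2, h3, hGamma, hpow]
  rw [show (2:ℝ) * (2 * Real.sqrt 2 * (1/2) * (Real.sqrt Real.pi / 2))
      = Real.sqrt 2 * Real.sqrt Real.pi by ring, ← Real.sqrt_mul (by norm_num)]
  exact inv_mul_cancel₀ (ne_of_gt sqrt2pi_pos)

lemma int_abs_g1 : ∫ t, |t| * g1 t = 2 * (Real.sqrt (2 * Real.pi))⁻¹ := by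
  unfold g1
  have h1 : ∫ t : ℝ, |t| * ((Real.sqrt (2 * Real.pi))⁻¹ * Real.exp (-(1/2) * t ^ 2))
      = (Real.sqrt (2 * Real.pi))⁻¹ * ∫ t : ℝ, |t| * Real.exp (-(1/2) * t ^ 2) := by
    rw [← integral_const_mul]; congr 1; ext t; ring
  rw [h1]
  have h2 : ∫ t : ℝ, |t| * Real.exp (-(1/2) * t ^ 2)
      = 2 * ∫ t in Set.Ioi (0:ℝ), t * Real.exp (-(1/2) * t ^ 2) := by
    rw [← integral_comp_abs (f := fun t => t * Real.exp (-(1/2) * t ^ 2))]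
    congr 1; ext t; rw [sq_abs]
  have h3 : ∫ t in Set.Ioi (0:ℝ), t * Real.exp (-(1/2) * t ^ 2)
      = (1/2 : ℝ) ^ (-(2:ℝ)/2) * (1/2) * Real.Gamma ((2:ℝ)/2) := by
    have := int_Ioi_rpow 1 (by norm_num)
    rw [show ((1:ℝ)+1)/2 = (2:ℝ)/2 by norm_num, show (-((1:ℝ)+1)/2) = -(2:ℝ)/2 by norm_num] at this
    rw [← this]
    refine setIntegral_congr_fun measurableSet_Ioi (fun t ht => ?_)
    rw [Real.rpow_one]
  rw [h2, h3]
  rw [show ((2:ℝ)/2) = 1 by norm_num, Real.Gamma_one,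
    show (-(2:ℝ)/2) = -1 by norm_num, Real.rpow_neg_one]
  norm_num
  ring

/-! ### Transfer between `EuclideanSpace ℝ (Fin 2)` and `ℝ × ℝ` -/

noncomputable def T2 : ℝ × ℝ ≃ᵐ EuclideanSpace ℝ (Fin 2) :=
  (MeasurableEquiv.finTwoArrow : (Fin 2 → ℝ) ≃ᵐ ℝ × ℝ).symm.trans
    (MeasurableEquiv.toLp 2 (Fin 2 → ℝ))

lemma T2_mp : MeasurePreserving T2 volume volume :=
  ((EuclideanSpace.volume_preserving_symm_measurableEquiv_toLp (Fin 2)).symm).comp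
    (volume_preserving_finTwoArrow ℝ).symm

@[simp] lemma T2_apply0 (p : ℝ × ℝ) : T2 p 0 = p.1 := by
  simp [T2, MeasurableEquiv.finTwoArrow]

@[simp] lemma T2_apply1 (p : ℝ × ℝ) : T2 p 1 = p.2 := by
  simp [T2, MeasurableEquiv.finTwoArrow]

lemma integral_T2 (f : EuclideanSpace ℝ (Fin 2) → ℝ) :
    ∫ y, f y = ∫ p : ℝ × ℝ, f (T2 p) :=
  (T2_mp.integral_comp T2.measurableEmbedding f).symm

lemma integrable_T2 (f : EuclideanSpace ℝ (Fin 2) → ℝ) :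
    Integrable f ↔ Integrable (fun p : ℝ × ℝ => f (T2 p)) :=
  (T2_mp.integrable_comp_emb T2.measurableEmbedding).symm

lemma norm_sq_E2 (y : EuclideanSpace ℝ (Fin 2)) : ‖y‖ ^ 2 = y 0 ^ 2 + y 1 ^ 2 := by
  rw [EuclideanSpace.norm_eq]
  rw [Real.sq_sqrt (by positivity)]
  simp [Fin.sum_univ_two, sq_abs]

lemma stdGauss2_eq (y : EuclideanSpace ℝ (Fin 2)) : stdGauss2 y = g1 (y 0) * g1 (y 1) := by
  unfold stdGauss2 g1
  rw [norm_sq_E2]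
  rw [show (Real.sqrt (2*Real.pi))⁻¹ * Real.exp (-(1/2) * y 0 ^2) * ((Real.sqrt (2*Real.pi))⁻¹ * Real.exp (-(1/2) * y 1 ^2)) = ((Real.sqrt (2*Real.pi))⁻¹ * (Real.sqrt (2*Real.pi))⁻¹) * (Real.exp (-(1/2) * y 0 ^2) * Real.exp (-(1/2) * y 1 ^2)) by ring]
  rw [← Real.exp_add, ← mul_inv, Real.mul_self_sqrt (by positivity)]
  congr 1
  ring

lemma ext2 {x y : EuclideanSpace ℝ (Fin 2)} (h0 : x 0 = y 0) (h1 : x 1 = y 1) : x = y := by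
  ext i; fin_cases i <;> assumption

/-! ### The rotation by 45 degrees -/

noncomputable def mk2 (a b : ℝ) : EuclideanSpace ℝ (Fin 2) :=
  (WithLp.equiv 2 (Fin 2 → ℝ)).symm ![a, b]

@[simp] lemma mk2_apply0 (a b : ℝ) : mk2 a b 0 = a := rfl
@[simp] lemma mk2_apply1 (a b : ℝ) : mk2 a b 1 = b := rfl

noncomputable def rotFun (y : EuclideanSpace ℝ (Fin 2)) : EuclideanSpace ℝ (Fin 2) :=
  mk2 ((y 0 + y 1) / Real.sqrt 2) ((y 0 - y 1) / Real.sqrt 2)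

@[simp] lemma rotFun_apply0 (y : EuclideanSpace ℝ (Fin 2)) :
    rotFun y 0 = (y 0 + y 1) / Real.sqrt 2 := rfl
@[simp] lemma rotFun_apply1 (y : EuclideanSpace ℝ (Fin 2)) :
    rotFun y 1 = (y 0 - y 1) / Real.sqrt 2 := rfl

lemma sqrt2_sq : Real.sqrt 2 * Real.sqrt 2 = 2 := Real.mul_self_sqrt (by norm_num)

noncomputable def rotLinMap : EuclideanSpace ℝ (Fin 2) →ₗ[ℝ] EuclideanSpace ℝ (Fin 2) where
  toFun := rotFun
  map_add' x y := by
    refine ext2 ?_ ?_ <;> simp [rotFun, PiLp.add_apply] <;> ring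
  map_smul' c x := by
    refine ext2 ?_ ?_ <;> simp [rotFun, PiLp.smul_apply, smul_eq_mul] <;> ring

lemma rot_invol : Function.Involutive rotFun := by
  intro y
  refine ext2 ?_ ?_ <;> simp <;> field_simp <;> rw [Real.sq_sqrt (by norm_num)] <;> ring

lemma rot_norm (y : EuclideanSpace ℝ (Fin 2)) : ‖rotFun y‖ = ‖y‖ := by
  rw [EuclideanSpace.norm_eq, EuclideanSpace.norm_eq]
  congr 1
  simp only [Fin.sum_univ_two, Real.norm_eq_abs, sq_abs, rotFun_apply0, rotFun_apply1]
  rw [div_pow, div_pow]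
  rw [show Real.sqrt 2 ^ 2 = 2 by rw [sq]; exact sqrt2_sq]
  ring

noncomputable def rotIso : EuclideanSpace ℝ (Fin 2) ≃ₗᵢ[ℝ] EuclideanSpace ℝ (Fin 2) :=
  { LinearEquiv.ofInvolutive rotLinMap rot_invol with
    norm_map' := rot_norm }

@[simp] lemma rotIso_apply0 (y : EuclideanSpace ℝ (Fin 2)) :
    rotIso y 0 = (y 0 + y 1) / Real.sqrt 2 := rfl
@[simp] lemma rotIso_apply1 (y : EuclideanSpace ℝ (Fin 2)) :
    rotIso y 1 = (y 0 - y 1) / Real.sqrt 2 := rfl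

lemma integral_rot (f : EuclideanSpace ℝ (Fin 2) → ℝ) :
    ∫ y, f y = ∫ y, f (rotIso y) :=
  (rotIso.measurePreserving.integral_comp rotIso.toHomeomorph.measurableEmbedding f).symm

/-! ### The diagonal null set -/

lemma null_diag : volume {y : EuclideanSpace ℝ (Fin 2) | |y 0| = |y 1|} = 0 := by
  set f1 : EuclideanSpace ℝ (Fin 2) →L[ℝ] ℝ := EuclideanSpace.proj 0 - EuclideanSpace.proj 1
  set f2 : EuclideanSpace ℝ (Fin 2) →L[ℝ] ℝ := EuclideanSpace.proj 0 + EuclideanSpace.proj 1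
  have hsub : {y : EuclideanSpace ℝ (Fin 2) | |y 0| = |y 1|} ⊆
      (LinearMap.ker (f1 : EuclideanSpace ℝ (Fin 2) →ₗ[ℝ] ℝ) : Set (EuclideanSpace ℝ (Fin 2))) ∪
      (LinearMap.ker (f2 : EuclideanSpace ℝ (Fin 2) →ₗ[ℝ] ℝ) : Set (EuclideanSpace ℝ (Fin 2))) := by
    intro y hy
    rcases abs_eq_abs.mp hy with h | h
    · left
      simp only [SetLike.mem_coe, LinearMap.mem_ker, ContinuousLinearMap.coe_coe, f1,
        ContinuousLinearMap.sub_apply, PiLp.proj_apply]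
      rw [h]; ring
    · right
      simp only [SetLike.mem_coe, LinearMap.mem_ker, ContinuousLinearMap.coe_coe, f2,
        ContinuousLinearMap.add_apply, PiLp.proj_apply]
      rw [h]; ring
  refine measure_mono_null hsub (measure_union_null ?_ ?_)
  · refine Measure.addHaar_submodule volume _ ?_
    intro h
    have h1 : f1 (EuclideanSpace.single 0 1) = 0 := by
      have := LinearMap.ker_eq_top.mp h
      have : (f1 : EuclideanSpace ℝ (Fin 2) →ₗ[ℝ] ℝ) (EuclideanSpace.single 0 1) = 0 := by
        rw [this]; rfl
      simpa using this
    simp [f1, ContinuousLinearMap.sub_apply, PiLp.proj_apply,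
      EuclideanSpace.single_apply] at h1
  · refine Measure.addHaar_submodule volume _ ?_
    intro h
    have h1 : f2 (EuclideanSpace.single 0 1) = 0 := by
      have := LinearMap.ker_eq_top.mp h
      have : (f2 : EuclideanSpace ℝ (Fin 2) →ₗ[ℝ] ℝ) (EuclideanSpace.single 0 1) = 0 := by
        rw [this]; rfl
      simpa using this
    simp [f2, ContinuousLinearMap.add_apply, PiLp.proj_apply,
      EuclideanSpace.single_apply] at h1

lemma ae_off_diag : ∀ᵐ y : EuclideanSpace ℝ (Fin 2), ¬ |y 0| = |y 1| :=
  measure_eq_zero_iff_ae_notMem.mp null_diag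

/-! ### Product helpers -/

lemma integrable_prod_mul' {f g : ℝ → ℝ} (hf : Integrable f) (hg : Integrable g) :
    Integrable (fun p : ℝ × ℝ => f p.1 * g p.2) := by
  rw [Measure.volume_eq_prod]; exact hf.mul_prod hg

lemma integral_prod_mul' (f g : ℝ → ℝ) :
    ∫ p : ℝ × ℝ, f p.1 * g p.2 = (∫ t, f t) * ∫ t, g t := by
  rw [Measure.volume_eq_prod]; exact integral_prod_mul f g

lemma int_stdGauss2 : ∫ y, stdGauss2 y = 1 := by
  rw [integral_T2]
  simp only [stdGauss2_eq, T2_apply0, T2_apply1]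
  rw [integral_prod_mul' g1 g1, int_g1]; norm_num

lemma integrable_fA : Integrable (fun y : EuclideanSpace ℝ (Fin 2) =>
    (if |y 1| < |y 0| then y 0 ^ 2 else 0) * stdGauss2 y) := by
  rw [integrable_T2]
  simp only [stdGauss2_eq, T2_apply0, T2_apply1]
  have hbound : Integrable (fun p : ℝ × ℝ => (p.1 ^ 2 * g1 p.1) * g1 p.2) :=
    integrable_prod_mul' integrable_sq_g1 integrable_g1
  refine hbound.mono' ?_ (Filter.Eventually.of_forall fun p => ?_)
  · exact ((Measurable.ite (measurableSet_lt measurable_snd.abs measurable_fst.abs)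
      (measurable_fst.pow_const 2) measurable_const).mul
      ((g1_cont.measurable.comp measurable_fst).mul
        (g1_cont.measurable.comp measurable_snd))).aestronglyMeasurable
  · rw [Real.norm_eq_abs, abs_mul]
    split_ifs
    · rw [abs_of_nonneg (sq_nonneg _), abs_of_nonneg (mul_nonneg (g1_nonneg _) (g1_nonneg _)),
        mul_assoc]
    · simp only [abs_zero, zero_mul]
      have := g1_nonneg p.1; have := g1_nonneg p.2; positivity

lemma integrable_fB : Integrable (fun y : EuclideanSpace ℝ (Fin 2) =>
    (if |y 0| < |y 1| then y 1 ^ 2 else 0) * stdGauss2 y) := by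
  rw [integrable_T2]
  simp only [stdGauss2_eq, T2_apply0, T2_apply1]
  have hbound : Integrable (fun p : ℝ × ℝ => g1 p.1 * (p.2 ^ 2 * g1 p.2)) :=
    integrable_prod_mul' integrable_g1 integrable_sq_g1
  refine hbound.mono' ?_ (Filter.Eventually.of_forall fun p => ?_)
  · exact ((Measurable.ite (measurableSet_lt measurable_fst.abs measurable_snd.abs)
      (measurable_snd.pow_const 2) measurable_const).mul
      ((g1_cont.measurable.comp measurable_fst).mul
        (g1_cont.measurable.comp measurable_snd))).aestronglyMeasurable
  · rw [Real.norm_eq_abs, abs_mul]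
    split_ifs
    · rw [abs_of_nonneg (sq_nonneg _), abs_of_nonneg (mul_nonneg (g1_nonneg _) (g1_nonneg _))]
      rw [show g1 p.1 * (p.2 ^ 2 * g1 p.2) = p.2 ^ 2 * (g1 p.1 * g1 p.2) by ring]
    · simp only [abs_zero, zero_mul]
      have := g1_nonneg p.1; have := g1_nonneg p.2; positivity

lemma max_rot (a b : ℝ) :
    max (((a + b) / Real.sqrt 2) ^ 2) (((a - b) / Real.sqrt 2) ^ 2)
      = (a ^ 2 + b ^ 2) / 2 + |a| * |b| := by
  have hmax : ∀ u v : ℝ, max u v = (u + v + |u - v|) / 2 := by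
    intro u v
    rcases le_total u v with h | h
    · rw [max_eq_right h, abs_of_nonpos (by linarith)]; ring
    · rw [max_eq_left h, abs_of_nonneg (by linarith)]; ring
  rw [hmax, div_pow, div_pow, show Real.sqrt 2 ^ 2 = 2 by rw [sq]; exact sqrt2_sq]
  rw [show (a + b) ^ 2 / 2 - (a - b) ^ 2 / 2 = 2 * (a * b) by ring, abs_mul, abs_mul,
    abs_two]
  ring

lemma int_max : (∫ y : EuclideanSpace ℝ (Fin 2), max ((y 0) ^ 2) ((y 1) ^ 2) * stdGauss2 y)
    = 1 + 2 / Real.pi := by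
  have hcong : ∀ y : EuclideanSpace ℝ (Fin 2),
      max ((rotIso y 0) ^ 2) ((rotIso y 1) ^ 2) * stdGauss2 (rotIso y)
        = ((y 0 ^ 2 + y 1 ^ 2) / 2 + |y 0| * |y 1|) * stdGauss2 y := by
    intro y
    rw [rotIso_apply0, rotIso_apply1, max_rot]
    congr 1
    unfold stdGauss2
    rw [show ‖rotIso y‖ = ‖y‖ from rotIso.norm_map y]
  have step1 : (∫ y : EuclideanSpace ℝ (Fin 2), max ((y 0) ^ 2) ((y 1) ^ 2) * stdGauss2 y)
      = ∫ y : EuclideanSpace ℝ (Fin 2), ((y 0 ^ 2 + y 1 ^ 2) / 2 + |y 0| * |y 1|) * stdGauss2 y := by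
    rw [integral_rot (fun y => max ((y 0) ^ 2) ((y 1) ^ 2) * stdGauss2 y)]
    exact integral_congr_ae (Filter.Eventually.of_forall hcong)
  rw [step1, integral_T2]
  simp only [stdGauss2_eq, T2_apply0, T2_apply1]
  have hre : ∀ p : ℝ × ℝ, ((p.1 ^ 2 + p.2 ^ 2) / 2 + |p.1| * |p.2|) * (g1 p.1 * g1 p.2)
      = (1/2 : ℝ) * ((p.1 ^ 2 * g1 p.1) * g1 p.2)
        + ((1/2 : ℝ) * (g1 p.1 * (p.2 ^ 2 * g1 p.2))
          + (|p.1| * g1 p.1) * (|p.2| * g1 p.2)) := fun p => by ring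
  rw [integral_congr_ae (Filter.Eventually.of_forall hre)]
  have i1 : Integrable (fun p : ℝ × ℝ => (1/2 : ℝ) * ((p.1 ^ 2 * g1 p.1) * g1 p.2)) :=
    (integrable_prod_mul' integrable_sq_g1 integrable_g1).const_mul _
  have i2 : Integrable (fun p : ℝ × ℝ => (1/2 : ℝ) * (g1 p.1 * (p.2 ^ 2 * g1 p.2))) :=
    (integrable_prod_mul' integrable_g1 integrable_sq_g1).const_mul _
  have i3 : Integrable (fun p : ℝ × ℝ => (|p.1| * g1 p.1) * (|p.2| * g1 p.2)) :=
    integrable_prod_mul' integrable_abs_g1 integrable_abs_g1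
  have i23 : Integrable (fun p : ℝ × ℝ => (1/2 : ℝ) * (g1 p.1 * (p.2 ^ 2 * g1 p.2))
      + (|p.1| * g1 p.1) * (|p.2| * g1 p.2)) := i2.add i3
  rw [integral_add i1 i23, integral_add i2 i3, integral_const_mul, integral_const_mul]
  have e1 : (∫ p : ℝ × ℝ, (p.1 ^ 2 * g1 p.1) * g1 p.2) = (∫ t, t ^ 2 * g1 t) * ∫ t, g1 t :=
    integral_prod_mul' (fun t => t ^ 2 * g1 t) g1
  have e2 : (∫ p : ℝ × ℝ, g1 p.1 * (p.2 ^ 2 * g1 p.2)) = (∫ t, g1 t) * ∫ t, t ^ 2 * g1 t :=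
    integral_prod_mul' g1 (fun t => t ^ 2 * g1 t)
  have e3 : (∫ p : ℝ × ℝ, (|p.1| * g1 p.1) * (|p.2| * g1 p.2))
      = (∫ t, |t| * g1 t) * ∫ t, |t| * g1 t :=
    integral_prod_mul' (fun t => |t| * g1 t) (fun t => |t| * g1 t)
  rw [e1, e2, e3, int_g1, int_sq_g1, int_abs_g1]
  have hc : (Real.sqrt (2 * Real.pi))⁻¹ * (Real.sqrt (2 * Real.pi))⁻¹ = (2 * Real.pi)⁻¹ := by
    rw [← mul_inv, Real.mul_self_sqrt (by positivity)]
  have hpi : Real.pi ≠ 0 := Real.pi_ne_zero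
  rw [show (2 * (Real.sqrt (2 * Real.pi))⁻¹) * (2 * (Real.sqrt (2 * Real.pi))⁻¹)
      = 4 * ((Real.sqrt (2 * Real.pi))⁻¹ * (Real.sqrt (2 * Real.pi))⁻¹) by ring, hc]
  field_simp
  ring

/-- **Degrees of freedom for selecting between the two coordinate axes in `ℝ²`.**
Let `Y ~ N(0, I₂)` and let `pr` be the metric projection onto the union `K` of the two
coordinate axes, `pr(y₁, y₂) = (y₁·1{|y₁| > |y₂|}, y₂·1{|y₂| > |y₁|})`. Then
`df = Σᵢ cov(Yᵢ, prᵢ(Y)) = E max{Y₁², Y₂²} = 1 + 2/π`, while the Stein degrees of freedom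
`df_S = E(∇·pr(Y)) = 1`; hence `df - df_S = 2/π > 0`. -/
theorem df_two_axes
    (pr : EuclideanSpace ℝ (Fin 2) → EuclideanSpace ℝ (Fin 2))
    (hpr0 : ∀ y, pr y 0 = if |y 1| < |y 0| then y 0 else 0)
    (hpr1 : ∀ y, pr y 1 = if |y 0| < |y 1| then y 1 else 0) :
    (∑ i : Fin 2, ∫ y, pr y i * y i * stdGauss2 y) =
      (∫ y : EuclideanSpace ℝ (Fin 2), max ((y 0) ^ 2) ((y 1) ^ 2) * stdGauss2 y) ∧
    (∑ i : Fin 2, ∫ y, pr y i * y i * stdGauss2 y) = 1 + 2 / Real.pi ∧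
    (∫ y, (fderiv ℝ pr y (EuclideanSpace.single 0 1) 0 +
        fderiv ℝ pr y (EuclideanSpace.single 1 1) 1) * stdGauss2 y) = 1 ∧
    (0 : ℝ) < 2 / Real.pi := by
  have habs0 : ∀ y : EuclideanSpace ℝ (Fin 2),
      pr y 0 * y 0 * stdGauss2 y = (if |y 1| < |y 0| then y 0 ^ 2 else 0) * stdGauss2 y := by
    intro y; rw [hpr0 y]; split_ifs <;> ring
  have habs1 : ∀ y : EuclideanSpace ℝ (Fin 2),
      pr y 1 * y 1 * stdGauss2 y = (if |y 0| < |y 1| then y 1 ^ 2 else 0) * stdGauss2 y := by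
    intro y; rw [hpr1 y]; split_ifs <;> ring
  have hsum : (∑ i : Fin 2, ∫ y, pr y i * y i * stdGauss2 y)
      = (∫ y, (if |y 1| < |y 0| then y 0 ^ 2 else 0) * stdGauss2 y)
        + ∫ y, (if |y 0| < |y 1| then y 1 ^ 2 else 0) * stdGauss2 y := by
    rw [Fin.sum_univ_two]
    congr 1
    · exact integral_congr_ae (Filter.Eventually.of_forall habs0)
    · exact integral_congr_ae (Filter.Eventually.of_forall habs1)
  have hIAB : (∫ y, (if |y 1| < |y 0| then y 0 ^ 2 else 0) * stdGauss2 y)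
        + (∫ y, (if |y 0| < |y 1| then y 1 ^ 2 else 0) * stdGauss2 y)
      = ∫ y : EuclideanSpace ℝ (Fin 2), max ((y 0) ^ 2) ((y 1) ^ 2) * stdGauss2 y := by
    rw [← integral_add integrable_fA integrable_fB]
    refine integral_congr_ae ?_
    filter_upwards [ae_off_diag] with y hy
    rcases lt_or_gt_of_ne hy with h | h
    · -- |y 0| < |y 1|
      have h2 : y 0 ^ 2 ≤ y 1 ^ 2 := by
        rw [← sq_abs (y 0), ← sq_abs (y 1)]
        exact pow_le_pow_left₀ (abs_nonneg _) h.le 2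
      rw [if_neg (asymm h), if_pos h, max_eq_right h2]
      ring
    · -- |y 1| < |y 0|
      have h2 : y 1 ^ 2 ≤ y 0 ^ 2 := by
        rw [← sq_abs (y 0), ← sq_abs (y 1)]
        exact pow_le_pow_left₀ (abs_nonneg _) h.le 2
      rw [if_pos h, if_neg (asymm h), max_eq_left h2]
      ring
  have part1 : (∑ i : Fin 2, ∫ y, pr y i * y i * stdGauss2 y)
      = ∫ y : EuclideanSpace ℝ (Fin 2), max ((y 0) ^ 2) ((y 1) ^ 2) * stdGauss2 y :=
    hsum.trans hIAB
  refine ⟨part1, part1.trans int_max, ?_, by positivity⟩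
  -- the divergence part
  have c0 : Continuous (fun z : EuclideanSpace ℝ (Fin 2) => z 0) :=
    (EuclideanSpace.proj (0 : Fin 2) : EuclideanSpace ℝ (Fin 2) →L[ℝ] ℝ).continuous
  have c1 : Continuous (fun z : EuclideanSpace ℝ (Fin 2) => z 1) :=
    (EuclideanSpace.proj (1 : Fin 2) : EuclideanSpace ℝ (Fin 2) →L[ℝ] ℝ).continuous
  have hdiv : ∀ᵐ y : EuclideanSpace ℝ (Fin 2),
      (fderiv ℝ pr y (EuclideanSpace.single 0 1) 0 +
        fderiv ℝ pr y (EuclideanSpace.single 1 1) 1) * stdGauss2 y = stdGauss2 y := by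
    filter_upwards [ae_off_diag] with y hy
    rcases lt_or_gt_of_ne hy with h | h
    · -- |y 0| < |y 1| : locally pr z = z 1 • mk2 0 1
      have hopen : IsOpen {z : EuclideanSpace ℝ (Fin 2) | |z 0| < |z 1|} := isOpen_lt c0.abs c1.abs
      have hmem : {z : EuclideanSpace ℝ (Fin 2) | |z 0| < |z 1|} ∈ nhds y := hopen.mem_nhds h
      set L : EuclideanSpace ℝ (Fin 2) →L[ℝ] EuclideanSpace ℝ (Fin 2) :=
        (EuclideanSpace.proj (1 : Fin 2)).smulRight (mk2 0 1) with hL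
      have heq : pr =ᶠ[nhds y] L := by
        refine Filter.eventuallyEq_of_mem hmem fun z hz => ?_
        have hz' : |z 0| < |z 1| := hz
        refine ext2 ?_ ?_
        · rw [hpr0 z, if_neg (asymm hz')]
          simp [hL, ContinuousLinearMap.smulRight_apply, PiLp.smul_apply, smul_eq_mul]
        · rw [hpr1 z, if_pos hz']
          simp [hL, ContinuousLinearMap.smulRight_apply, PiLp.smul_apply, smul_eq_mul]
      have hfd : fderiv ℝ pr y = L := by rw [heq.fderiv_eq]; exact L.fderiv
      rw [hfd]
      simp [hL, ContinuousLinearMap.smulRight_apply, PiLp.smul_apply, smul_eq_mul,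
        EuclideanSpace.single_apply]
    · -- |y 1| < |y 0| : locally pr z = z 0 • mk2 1 0
      have hopen : IsOpen {z : EuclideanSpace ℝ (Fin 2) | |z 1| < |z 0|} := isOpen_lt c1.abs c0.abs
      have hmem : {z : EuclideanSpace ℝ (Fin 2) | |z 1| < |z 0|} ∈ nhds y := hopen.mem_nhds h
      set L : EuclideanSpace ℝ (Fin 2) →L[ℝ] EuclideanSpace ℝ (Fin 2) :=
        (EuclideanSpace.proj (0 : Fin 2)).smulRight (mk2 1 0) with hL
      have heq : pr =ᶠ[nhds y] L := by
        refine Filter.eventuallyEq_of_mem hmem fun z hz => ?_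
        have hz' : |z 1| < |z 0| := hz
        refine ext2 ?_ ?_
        · rw [hpr0 z, if_pos hz']
          simp [hL, ContinuousLinearMap.smulRight_apply, PiLp.smul_apply, smul_eq_mul]
        · rw [hpr1 z, if_neg (asymm hz')]
          simp [hL, ContinuousLinearMap.smulRight_apply, PiLp.smul_apply, smul_eq_mul]
      have hfd : fderiv ℝ pr y = L := by rw [heq.fderiv_eq]; exact L.fderiv
      rw [hfd]
      simp [hL, ContinuousLinearMap.smulRight_apply, PiLp.smul_apply, smul_eq_mul,
        EuclideanSpace.single_apply]
  rw [integral_congr_ae hdiv]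
  exact int_stdGauss2
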